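/- arXiv:2406.12751 — 2 statements merged into one kernel-verified Lean document; each statement's English description precedes it below -/
import Mathlib

section
/- Let α be a peak composition of n. For every marked peak composition tableau T ∈ MPCT(α), the standardisation Std(T) is a standard marked peak composition tableau of shape α, i.e. Std(T) ∈ SMPCT(α). -/
open scoped Classical

noncomputable section

namespace QSQ

/-- A box `(c, r)`: column `c`, row `r` (both 1-indexed, rows counted from the bottom). -/
abbrev Box : Type := ℕ × ℕ

/-- An entry of the marked alphabet: `(i, true)` represents `i′`, `(i, false)` represents `i`. -/
abbrev MEntry : Type := ℕ × Bool

/-- Code realising the marked-alphabet order `1′ < 1 < 2′ < 2 < ⋯`. -/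
def mcode (x : MEntry) : ℕ := 2 * x.1 - (if x.2 then 1 else 0)

/-- `α` is a composition of `n`: a list of positive integers summing to `n`. -/
def IsComposition (n : ℕ) (α : List ℕ) : Prop := (∀ a ∈ α, 0 < a) ∧ α.sum = n

/-- All parts are positive, and every part except possibly the last is `> 1`. -/
def PeakShape (α : List ℕ) : Prop :=
  (∀ a ∈ α, 0 < a) ∧ ∀ i, i + 1 < α.length → 1 < α.getD i 0

/-- `α` is a peak composition of `n`. -/
def IsPeakComposition (n : ℕ) (α : List ℕ) : Prop := IsComposition n α ∧ PeakShape α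

/-- Box `(c, r)` belongs to the diagram `D_α`. -/
def inDiagram (α : List ℕ) (b : Box) : Prop :=
  1 ≤ b.1 ∧ 1 ≤ b.2 ∧ b.2 ≤ α.length ∧ b.1 ≤ α.getD (b.2 - 1) 0

instance (α : List ℕ) (b : Box) : Decidable (inDiagram α b) := by
  unfold inDiagram; infer_instance

/-- The diagram `D_α` as a finite set of boxes. -/
def diagramFinset (α : List ℕ) : Finset Box :=
  ((Finset.Icc 1 (α.foldr max 0)) ×ˢ (Finset.Icc 1 α.length)).filter (fun b => inDiagram α b)

/-- `B` is the set of boxes of the diagram of some peak composition. -/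
def IsPeakDiagram (B : Set Box) : Prop :=
  ∃ γ : List ℕ, PeakShape γ ∧ B = {b | inDiagram γ b}

/-- `β` refines `α`: `α` is obtained by summing consecutive entries of `β`. -/
def Refines (β α : List ℕ) : Prop :=
  ∃ L : List (List ℕ), (∀ l ∈ L, l ≠ []) ∧ L.flatten = β ∧ L.map List.sum = α

/-- `set(γ) = {γ₁, γ₁+γ₂, …, γ₁+⋯+γ_{k-1}}`, the proper partial sums. -/
def setOfComp (γ : List ℕ) : Finset ℕ :=
  ((List.range (γ.length - 1)).map (fun i => (γ.take (i + 1)).sum)).toFinset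

/-- `comp_n(X)`: the composition of `n` whose set of proper partial sums is `X ⊆ [n-1]`. -/
def compOf (n : ℕ) (X : Finset ℕ) : List ℕ :=
  let l := (0 :: X.sort (· ≤ ·)) ++ [n]
  (List.range (l.length - 1)).map (fun i => l.getD (i + 1) 0 - l.getD i 0)

/-- `Peak(X) = {i ∈ X : i − 1 ∉ X and i ≠ 1}`. -/
def peakSet (X : Finset ℕ) : Finset ℕ := X.filter (fun i => (i - 1) ∉ X ∧ i ≠ 1)

/-! ### Marked peak composition tableaux -/

/-- `T` is a marked peak composition tableau of shape `α` (a peak composition of `n`).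
Fillings take the default value `(0, false)` outside the diagram. -/
structure IsMPCT (n : ℕ) (α : List ℕ) (T : Box → MEntry) : Prop where
  offDiag : ∀ b, ¬ inDiagram α b → T b = (0, false)
  pos : ∀ b, inDiagram α b → 1 ≤ (T b).1
  /-- (MPCT1) rows weakly increase, with no repeated marked entry in a row. -/
  row_weak : ∀ c c' r, c < c' → inDiagram α (c, r) → inDiagram α (c', r) →
      mcode (T (c, r)) ≤ mcode (T (c', r)) ∧ ((T (c, r)).2 = true → T (c, r) ≠ T (c', r))
  /-- (MPCT2) the first column strictly increases bottom to top. -/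
  col_strict : ∀ r r', r < r' → inDiagram α (1, r) → inDiagram α (1, r') →
      mcode (T (1, r)) < mcode (T (1, r'))
  /-- (MPCT3) the boxes with entries among `{1', 1, …, k', k}` form a peak-composition diagram. -/
  peak_filter : ∀ k ≤ n, IsPeakDiagram {b | inDiagram α b ∧ (T b).1 ≤ k}
  /-- (MPCT4) an unmarked `i` in box `(2,r)` forbids `i` and `i'` in box `(1,r+1)`. -/
  mpct4 : ∀ r, inDiagram α (2, r) → inDiagram α (1, r + 1) → (T (2, r)).2 = false →
      (T (1, r + 1)).1 ≠ (T (2, r)).1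

/-- The number of occurrences of `i` or `i'` in `T`. -/
def wtFun (α : List ℕ) (T : Box → MEntry) (i : ℕ) : ℕ :=
  ((diagramFinset α).filter (fun b => (T b).1 = i)).card

/-- The weight of `T` as a list `(wt(T)₁, …, wt(T)_m)`, `m` the largest value occurring. -/
def wtList (α : List ℕ) (T : Box → MEntry) : List ℕ :=
  (List.range ((diagramFinset α).sup (fun b => (T b).1))).map (fun i => wtFun α T (i + 1))

/-- `T ∈ MPCT(α)`: an MPCT whose weight has no zero entry to the left of a nonzero entry. -/
def InMPCT (n : ℕ) (α : List ℕ) (T : Box → MEntry) : Prop :=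
  IsMPCT n α T ∧ ∀ i j, 1 ≤ i → i < j → wtFun α T i = 0 → wtFun α T j = 0

/-- `T ∈ SMPCT(α)`: each number `1, …, n` appears exactly once (marked or unmarked). -/
def InSMPCT (n : ℕ) (α : List ℕ) (T : Box → MEntry) : Prop :=
  InMPCT n α T ∧ ∀ i, 1 ≤ i → i ≤ n → wtFun α T i = 1

/-! ### Standardisation -/

/-- Secondary key for the standardisation order: marked entries of a given value are taken
bottom to top; unmarked ones from the highest row downwards. -/
def stdk2 (α : List ℕ) (T : Box → MEntry) (b : Box) : ℕ :=
  if (T b).2 then b.2 else α.length + 1 - b.2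

/-- The strict total order on boxes in which standardisation assigns `1, 2, …, n`. -/
def keyLt (α : List ℕ) (T : Box → MEntry) (a b : Box) : Prop :=
  mcode (T a) < mcode (T b) ∨
    (mcode (T a) = mcode (T b) ∧ (stdk2 α T a < stdk2 α T b ∨
      (stdk2 α T a = stdk2 α T b ∧ a.1 < b.1)))

/-- The standardisation map: box `b` receives the rank of `b` in the standardisation order,
keeping its mark. -/
def stdize (α : List ℕ) (T : Box → MEntry) : Box → MEntry := fun b =>
  if inDiagram α b then
    (((diagramFinset α).filter (fun a => keyLt α T a b)).card + 1, (T b).2)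
  else (0, false)

/-- The descent set of `S ∈ SMPCT(α)`: `i` is a descent if `i` is unmarked and strictly below
`i+1`, or `i+1` is marked and weakly below `i`. -/
def DesM (n : ℕ) (α : List ℕ) (S : Box → MEntry) : Finset ℕ :=
  (Finset.Icc 1 (n - 1)).filter (fun i =>
    ∃ b ∈ diagramFinset α, ∃ b' ∈ diagramFinset α, (S b).1 = i ∧ (S b').1 = i + 1 ∧
      (((S b).2 = false ∧ b.2 < b'.2) ∨ ((S b').2 = true ∧ b'.2 ≤ b.2)))

/-- Remove all marks. -/
def unmark (S : Box → MEntry) : Box → ℕ := fun b => (S b).1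

/-! ### Standard (unmarked) tableaux -/

/-- `T` is a standard immaculate tableau of shape `α ⊨ n`: a bijective filling by `1, …, n`
with rows increasing left to right and the first column increasing bottom to top. -/
structure IsSIT (n : ℕ) (α : List ℕ) (T : Box → ℕ) : Prop where
  offDiag : ∀ b, ¬ inDiagram α b → T b = 0
  range : ∀ b, inDiagram α b → 1 ≤ T b ∧ T b ≤ n
  inj : ∀ b b', inDiagram α b → inDiagram α b' → T b = T b' → b = b'
  surj : ∀ i, 1 ≤ i → i ≤ n → ∃ b, inDiagram α b ∧ T b = i
  row_strict : ∀ c c' r, c < c' → inDiagram α (c, r) → inDiagram α (c', r) →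
      T (c, r) < T (c', r)
  col_strict : ∀ r r', r < r' → inDiagram α (1, r) → inDiagram α (1, r') →
      T (1, r) < T (1, r')

/-- (SPCT3)/(SPYCT3): for every `k ≤ n` the boxes with entries `≤ k` form the diagram of a
peak composition. -/
def SPCT3 (n : ℕ) (α : List ℕ) (T : Box → ℕ) : Prop :=
  ∀ k ≤ n, IsPeakDiagram {b | inDiagram α b ∧ T b ≤ k}

/-- Standard peak composition tableau. -/
def IsSPCT (n : ℕ) (α : List ℕ) (T : Box → ℕ) : Prop := IsSIT n α T ∧ SPCT3 n α T

/-- (SPYCT4): if `T(c,r) < T(c+1,r')` for some `r' < r` then box `(c+1,r)` exists and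
`T(c+1,r) < T(c+1,r')`. -/
def SPYCT4 (α : List ℕ) (T : Box → ℕ) : Prop :=
  ∀ c r r', r' < r → inDiagram α (c, r) → inDiagram α (c + 1, r') →
    T (c, r) < T (c + 1, r') → inDiagram α (c + 1, r) ∧ T (c + 1, r) < T (c + 1, r')

/-- Standard Young composition tableau. -/
def IsSYCT (n : ℕ) (α : List ℕ) (T : Box → ℕ) : Prop := IsSIT n α T ∧ SPYCT4 α T

/-- Standard peak Young composition tableau (of peak shape `α ⊨ n`). -/
def IsSPYCT (n : ℕ) (α : List ℕ) (T : Box → ℕ) : Prop :=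
  IsPeakComposition n α ∧ IsSIT n α T ∧ SPCT3 n α T ∧ SPYCT4 α T

/-- `Des↑(T) = {i : i+1 is strictly above i}`. -/
def DesUp (n : ℕ) (α : List ℕ) (T : Box → ℕ) : Finset ℕ :=
  (Finset.Icc 1 (n - 1)).filter (fun i =>
    ∃ b ∈ diagramFinset α, ∃ b' ∈ diagramFinset α, T b = i ∧ T b' = i + 1 ∧ b.2 < b'.2)

def PeakUp (n : ℕ) (α : List ℕ) (T : Box → ℕ) : Finset ℕ := peakSet (DesUp n α T)

/-- `Des←(T) = {i : i+1 is weakly left of i}`. -/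
def DesLeft (n : ℕ) (α : List ℕ) (T : Box → ℕ) : Finset ℕ :=
  (Finset.Icc 1 (n - 1)).filter (fun i =>
    ∃ b ∈ diagramFinset α, ∃ b' ∈ diagramFinset α, T b = i ∧ T b' = i + 1 ∧ b'.1 ≤ b.1)

def PeakLeft (n : ℕ) (α : List ℕ) (T : Box → ℕ) : Finset ℕ := peakSet (DesLeft n α T)

/-! ### Dual immaculate recording tableaux -/

/-- `i+1` lies strictly right of `i` in `Q` (so `i+1` continues the row strip of `i`). -/
def ContR (β : List ℕ) (Q : Box → ℕ) (i : ℕ) : Prop :=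
  ∃ b ∈ diagramFinset β, ∃ b' ∈ diagramFinset β, Q b = i ∧ Q b' = i + 1 ∧ b.1 < b'.1

/-- `Q` is a dual immaculate recording tableau of shape `β ⊨ n`. -/
structure IsDIRT (n : ℕ) (β : List ℕ) (Q : Box → ℕ) : Prop where
  offDiag : ∀ b, ¬ inDiagram β b → Q b = 0
  range : ∀ b, inDiagram β b → 1 ≤ Q b ∧ Q b ≤ n
  inj : ∀ b b', inDiagram β b → inDiagram β b' → Q b = Q b' → b = b'
  surj : ∀ i, 1 ≤ i → i ≤ n → ∃ b, inDiagram β b ∧ Q b = i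
  /-- (DIRT1) -/
  row_strict : ∀ c c' r, c < c' → inDiagram β (c, r) → inDiagram β (c', r) →
      Q (c, r) < Q (c', r)
  /-- (DIRT3) first-column entries increase from top to bottom. -/
  col_top_down : ∀ r r', r < r' → inDiagram β (1, r) → inDiagram β (1, r') →
      Q (1, r') < Q (1, r)
  /-- (DIRT2) row strips start in the first column. -/
  strips_start : ∀ i b, 1 ≤ i → i ≤ n → inDiagram β b → Q b = i →
      (i = 1 ∨ ¬ ContR β Q (i - 1)) → b.1 = 1
  /-- (DIRT4) -/
  dirt4 : ∀ c r r', r' < r → inDiagram β (c, r) → inDiagram β (c, r') →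
      Q (c, r') < Q (c, r) → inDiagram β (c + 1, r') ∧ Q (c + 1, r') < Q (c, r)

/-- `Q` has row strip shape `γ`: the breaks between row strips occur exactly at the proper
partial sums of `γ`. -/
def HasRowStripShape (n : ℕ) (β : List ℕ) (Q : Box → ℕ) (γ : List ℕ) : Prop :=
  IsComposition n γ ∧ ∀ i, 1 ≤ i → i + 1 ≤ n → (ContR β Q i ↔ i ∉ setOfComp γ)

/-! ### Quasisymmetric functions -/

/-- The monomial quasisymmetric function `M_α` in variables indexed by `ℕ`. -/
def Mqs (α : List ℕ) : MvPowerSeries ℕ ℚ := fun d =>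
  if ∃ f : Fin α.length → ℕ, StrictMono f ∧
      d = ∑ j : Fin α.length, Finsupp.single (f j) (α.get j) then 1 else 0

/-- The fundamental quasisymmetric function `F_α = Σ_{β refines α} M_β`. -/
def Fqs (α : List ℕ) : MvPowerSeries ℕ ℚ :=
  ∑ᶠ β ∈ {β : List ℕ | Refines β α}, Mqs β

/-- The peak function `K_α` for a peak composition `α ⊨ n`. -/
def Kfn (n : ℕ) (α : List ℕ) : MvPowerSeries ℕ ℚ :=
  (MvPowerSeries.C : ℚ →+* MvPowerSeries ℕ ℚ) ((2 : ℚ) ^ ((peakSet (setOfComp α)).card + 1)) *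
    ∑ᶠ β ∈ {β : List ℕ | IsComposition n β ∧
      peakSet (setOfComp α) ⊆ symmDiff (setOfComp β) ((setOfComp β).image (· + 1))}, Fqs β

/-- The quasisymmetric Schur Q-function `Q̃_α = Σ_{T ∈ MPCT(α)} M_{wt(T)}`. -/
def Qtilde (n : ℕ) (α : List ℕ) : MvPowerSeries ℕ ℚ :=
  ∑ᶠ T ∈ {T : Box → MEntry | InMPCT n α T}, Mqs (wtList α T)

/-- The peak Young quasisymmetric Schur function
`S̃_α = Σ_{T ∈ SPYCT(α)} K_{comp_n(Peak←(T))}`. -/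
def Stilde (n : ℕ) (α : List ℕ) : MvPowerSeries ℕ ℚ :=
  ∑ᶠ T ∈ {T : Box → ℕ | IsSPYCT n α T}, Kfn n (compOf n (PeakLeft n α T))

/-! ### The insertion algorithm of Allen–Hallam–Mason -/

/-- A tableau given concretely as its list of rows, from bottom to top. -/
def shapeOf (rows : List (List ℕ)) : List ℕ := rows.map List.length

/-- The filling `Box → ℕ` determined by a list of rows (bottom to top). -/
def toFilling (rows : List (List ℕ)) : Box → ℕ := fun b =>
  if 1 ≤ b.1 ∧ 1 ≤ b.2 then (rows.getD (b.2 - 1) []).getD (b.1 - 1) 0 else 0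

/-- The augmented-diagram scan order: columns right to left, each column top to bottom.
(Positions not present in a given row are simply skipped by the insertion step.) -/
def scanList (rows : List (List ℕ)) : List (ℕ × ℕ) :=
  let C := (rows.map List.length).foldr max 0 + 1
  ((List.range C).reverse.map (fun ci =>
    (List.range rows.length).reverse.map (fun ri => (ci + 1, ri + 1)))).flatten

/-- One insertion of `k` (Procedure 3.1 of Allen–Hallam–Mason): walk the scan list looking for
the first box `(c,r)` with `T̄(c-1,r) ≤ k < T̄(c,r)`; place at an augmented box, bump at an
interior box and continue with the bumped entry, or create a new row (in the highest position
in the first column with all first-column entries below smaller than `k`) if the scan ends.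
Returns the new rows and the position of the newly created box. -/
def insertScan : List (ℕ × ℕ) → ℕ → List (List ℕ) → List (List ℕ) × ℕ × ℕ
  | [], k, rows =>
      let j := (rows.takeWhile (fun row => row.headD 0 < k)).length
      (rows.take j ++ [[k]] ++ rows.drop j, (1, j + 1))
  | (c, r) :: rest, k, rows =>
      let row := rows.getD (r - 1) []
      if 2 ≤ c ∧ c ≤ row.length + 1 ∧ row.getD (c - 2) 0 ≤ k then
        if c = row.length + 1 then
          (rows.set (r - 1) (row ++ [k]), (c, r))
        else if k < row.getD (c - 1) 0 then
          insertScan rest (row.getD (c - 1) 0) (rows.set (r - 1) (row.set (c - 1) k))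
        else insertScan rest k rows
      else insertScan rest k rows

/-- The reading word of a filling of shape `α`: rows read top to bottom, left to right. -/
def readingWord (α : List ℕ) (T : Box → ℕ) : List ℕ :=
  ((List.range α.length).reverse.map (fun ri =>
    (List.range (α.getD ri 0)).map (fun ci => T (ci + 1, ri + 1)))).flatten

/-- Reading insertion: insert the letters of `w` successively into the (initially empty)
insertion tableau `P`, recording in `Q` the label of each newly created box. -/
def readingInsertPQ (w : List ℕ) : List (List ℕ) × List (List ℕ) :=
  w.foldl (fun PQ k =>
    let res := insertScan (scanList PQ.1) k PQ.1
    let c := res.2.1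
    let r := res.2.2
    let j := (PQ.2.map List.length).sum + 1
    if c = 1 then
      (res.1, PQ.2.take (r - 1) ++ [[j]] ++ PQ.2.drop (r - 1))
    else
      (res.1, PQ.2.set (r - 1) ((PQ.2.getD (r - 1) []) ++ [j]))) ([], [])

/-! ### Procedure 5.2: generating DIRTs -/

/-- `PlaceSeq rows v lc cnt out`: starting from `rows`, place the `cnt` entries
`v, v+1, …, v+cnt-1` one at a time, each at the end of some row strictly to the right of the
previously placed entry (whose column was `lc`), never placing at the end of a row of length
`j` when some lower row has length `j + 1`; `out` is the result. -/
inductive PlaceSeq : List (List ℕ) → ℕ → ℕ → ℕ → List (List ℕ) → Prop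
  | refl (rows : List (List ℕ)) (v lc : ℕ) : PlaceSeq rows v lc 0 rows
  | step (rows : List (List ℕ)) (v lc cnt : ℕ) (r : ℕ) (out : List (List ℕ))
      (hr : r < rows.length)
      (hright : lc < (rows.getD r []).length + 1)
      (hrule3 : ∀ r' < r, (rows.getD r' []).length ≠ (rows.getD r []).length + 1)
      (next : PlaceSeq (rows.set r ((rows.getD r []) ++ [v])) (v + 1)
        ((rows.getD r []).length + 1) cnt out) :
      PlaceSeq rows v lc (cnt + 1) out


section StdAux

open Finset

lemma le_foldr_max {l : List ℕ} {a : ℕ} (h : a ∈ l) : a ≤ l.foldr max 0 := by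
  induction l with
  | nil => cases h
  | cons x t ih =>
    rcases List.mem_cons.1 h with rfl | h
    · exact le_max_left _ _
    · exact le_trans (ih h) (le_max_right _ _)

lemma getD_le_foldr_max {l : List ℕ} {i : ℕ} (h : i < l.length) :
    l.getD i 0 ≤ l.foldr max 0 := by
  rw [List.getD_eq_getElem l 0 h]
  exact le_foldr_max (List.getElem_mem _)

lemma getD_mem {l : List ℕ} {i : ℕ} (h : i < l.length) : l.getD i 0 ∈ l := by
  rw [List.getD_eq_getElem l 0 h]
  exact List.getElem_mem _

lemma sum_range_getD (l : List ℕ) : ∑ i ∈ Finset.range l.length, l.getD i 0 = l.sum := by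
  induction l with
  | nil => simp
  | cons a t ih =>
    rw [List.length_cons, Finset.sum_range_succ']
    simp only [List.getD_cons_succ, List.getD_cons_zero, ih, List.sum_cons]
    omega

lemma mem_diagramFinset {α : List ℕ} {b : Box} :
    b ∈ diagramFinset α ↔ inDiagram α b := by
  unfold diagramFinset
  rw [Finset.mem_filter]
  constructor
  · exact fun h => h.2
  · intro h
    obtain ⟨h1, h2, h3, h4⟩ := h
    refine ⟨Finset.mem_product.2 ⟨?_, ?_⟩, h1, h2, h3, h4⟩
    · exact Finset.mem_Icc.2 ⟨h1, le_trans h4 (getD_le_foldr_max (by omega))⟩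
    · exact Finset.mem_Icc.2 ⟨h2, h3⟩

lemma card_diagramFinset (α : List ℕ) : (diagramFinset α).card = α.sum := by
  rw [Finset.card_eq_sum_card_fiberwise
    (f := fun b : Box => b.2) (t := Finset.Icc 1 α.length)
    (fun b hb => Finset.mem_Icc.2 ⟨(mem_diagramFinset.1 hb).2.1, (mem_diagramFinset.1 hb).2.2.1⟩)]
  have hfib : ∀ r ∈ Finset.Icc 1 α.length,
      ((diagramFinset α).filter (fun b => b.2 = r)).card = α.getD (r - 1) 0 := by
    intro r hr
    rw [Finset.mem_Icc] at hr
    have he : (diagramFinset α).filter (fun b => b.2 = r)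
        = (Finset.Icc 1 (α.getD (r - 1) 0)).map
          ⟨fun c => (c, r), fun a b h => (Prod.ext_iff.1 h).1⟩ := by
      ext ⟨c, r'⟩
      simp only [Finset.mem_filter, mem_diagramFinset, Finset.mem_map, Finset.mem_Icc,
        Function.Embedding.coeFn_mk, Prod.mk.injEq]
      constructor
      · rintro ⟨⟨h1, h2, h3, h4⟩, rfl⟩
        exact ⟨c, ⟨h1, h4⟩, rfl⟩
      · rintro ⟨c0, ⟨hc0, hc1⟩, rfl, rfl⟩
        exact ⟨⟨hc0, hr.1, hr.2, hc1⟩, rfl⟩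
    rw [he, Finset.card_map, Nat.card_Icc]
    omega
  rw [Finset.sum_congr rfl hfib, ← sum_range_getD α]
  refine Finset.sum_nbij' (fun r => r - 1) (fun i => i + 1) ?_ ?_ ?_ ?_ ?_ <;>
    intro a ha <;> simp only [Finset.mem_Icc, Finset.mem_range] at * <;> omega

lemma mcode_inj {x y : MEntry} (hx : 1 ≤ x.1) (hy : 1 ≤ y.1)
    (h : mcode x = mcode y) : x = y := by
  obtain ⟨a, s⟩ := x; obtain ⟨b, t⟩ := y
  cases s <;> cases t <;> simp_all [mcode, Prod.ext_iff] <;> try omega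

lemma keyLt_irrefl (α : List ℕ) (T : Box → MEntry) (b : Box) : ¬ keyLt α T b b := by
  unfold keyLt; omega

lemma keyLt_trans {α : List ℕ} {T : Box → MEntry} {a b c : Box}
    (h1 : keyLt α T a b) (h2 : keyLt α T b c) : keyLt α T a c := by
  unfold keyLt at *; omega

lemma keyLt_total {α : List ℕ} {T : Box → MEntry} {a b : Box}
    (ha1 : 1 ≤ (T a).1) (hb1 : 1 ≤ (T b).1)
    (ha : inDiagram α a) (hb : inDiagram α b) (hne : a ≠ b) :
    keyLt α T a b ∨ keyLt α T b a := by
  obtain ⟨_, ha2, haL, _⟩ := ha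
  obtain ⟨_, hb2, hbL, _⟩ := hb
  have hor : a.1 ≠ b.1 ∨ a.2 ≠ b.2 := by
    rcases eq_or_ne a.1 b.1 with h1 | h1
    · right; intro h2; exact hne (Prod.ext h1 h2)
    · left; exact h1
  rcases lt_trichotomy (mcode (T a)) (mcode (T b)) with h | h | h
  · exact Or.inl (Or.inl h)
  · have hTab : T a = T b := mcode_inj ha1 hb1 h
    unfold keyLt stdk2
    rw [hTab]
    by_cases hm : (T b).2 = true
    · rw [if_pos hm, if_pos hm]; omega
    · rw [if_neg hm, if_neg hm]; omega
  · exact Or.inr (Or.inl h)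

/-- rank of a box in the standardisation order -/
noncomputable def rk (α : List ℕ) (T : Box → MEntry) (b : Box) : ℕ :=
  ((diagramFinset α).filter (fun a => keyLt α T a b)).card

lemma stdize_apply {α : List ℕ} {T : Box → MEntry} {b : Box} (hb : inDiagram α b) :
    stdize α T b = (rk α T b + 1, (T b).2) := by
  unfold stdize rk
  rw [if_pos hb]

lemma stdize_apply_not {α : List ℕ} {T : Box → MEntry} {b : Box} (hb : ¬ inDiagram α b) :
    stdize α T b = (0, false) := by
  unfold stdize; rw [if_neg hb]

lemma rk_lt_rk {α : List ℕ} {T : Box → MEntry} {a b : Box}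
    (ha : inDiagram α a) (h : keyLt α T a b) : rk α T a < rk α T b := by
  apply Finset.card_lt_card
  rw [Finset.ssubset_def]
  constructor
  · intro x hx
    rw [Finset.mem_filter] at hx ⊢
    exact ⟨hx.1, keyLt_trans hx.2 h⟩
  · intro hsub
    have := hsub (Finset.mem_filter.2 ⟨mem_diagramFinset.2 ha, h⟩)
    exact keyLt_irrefl α T a (Finset.mem_filter.1 this).2

lemma rk_lt_card {α : List ℕ} {T : Box → MEntry} {b : Box} (hb : inDiagram α b) :
    rk α T b < (diagramFinset α).card := by
  apply Finset.card_lt_card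
  rw [Finset.ssubset_def]
  refine ⟨Finset.filter_subset _ _, fun hsub => ?_⟩
  have := hsub (mem_diagramFinset.2 hb)
  exact keyLt_irrefl α T b (Finset.mem_filter.1 this).2

lemma rk_injOn {n : ℕ} {α : List ℕ} {T : Box → MEntry} (hT : InMPCT n α T)
    {a b : Box} (ha : inDiagram α a) (hb : inDiagram α b)
    (h : rk α T a = rk α T b) : a = b := by
  by_contra hne
  rcases keyLt_total (hT.1.pos a ha) (hT.1.pos b hb) ha hb hne with hk | hk
  · exact absurd h (Nat.ne_of_lt (rk_lt_rk ha hk))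
  · exact absurd h.symm (Nat.ne_of_lt (rk_lt_rk hb hk))

lemma rk_surj {n : ℕ} {α : List ℕ} {T : Box → MEntry} (hT : InMPCT n α T)
    {m : ℕ} (hm : m < (diagramFinset α).card) :
    ∃ b, inDiagram α b ∧ rk α T b = m := by
  have himg : (diagramFinset α).image (rk α T) = Finset.range (diagramFinset α).card := by
    apply Finset.eq_of_subset_of_card_le
    · intro x hx
      obtain ⟨b, hb, rfl⟩ := Finset.mem_image.1 hx
      exact Finset.mem_range.2 (rk_lt_card (mem_diagramFinset.1 hb))
    · rw [Finset.card_range,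
        Finset.card_image_of_injOn (fun a ha b hb h =>
          rk_injOn hT (mem_diagramFinset.1 ha) (mem_diagramFinset.1 hb) h)]
  have : m ∈ (diagramFinset α).image (rk α T) := by
    rw [himg]; exact Finset.mem_range.2 hm
  obtain ⟨b, hb, hh⟩ := Finset.mem_image.1 this
  exact ⟨b, mem_diagramFinset.1 hb, hh⟩

lemma value_le {n : ℕ} {α : List ℕ} {T : Box → MEntry} (hT : InMPCT n α T)
    (hcard : (diagramFinset α).card = n) {b : Box} (hb : inDiagram α b) : (T b).1 ≤ n := by
  by_contra hgt
  push_neg at hgt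
  set m := (T b).1 with hm
  have hbmem : ∀ i, i = m → 1 ≤ wtFun α T i := by
    intro i hi
    have : b ∈ (diagramFinset α).filter (fun b => (T b).1 = i) :=
      Finset.mem_filter.2 ⟨mem_diagramFinset.2 hb, hi.symm⟩
    exact Finset.card_pos.2 ⟨b, this⟩
  have hall : ∀ i ∈ Finset.Icc 1 m, 1 ≤ wtFun α T i := by
    intro i hi
    rw [Finset.mem_Icc] at hi
    rcases eq_or_lt_of_le hi.2 with h | h
    · exact hbmem i h
    · by_contra h0
      push_neg at h0
      have h1 : wtFun α T i = 0 := by omega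
      have := hT.2 i m hi.1 h h1
      have := hbmem m rfl
      omega
  have hsum : ∑ i ∈ Finset.Icc 1 m, wtFun α T i ≤ n := by
    rw [← hcard]
    have key := Finset.card_eq_sum_card_fiberwise (f := fun b : Box => (T b).1)
      (s := (diagramFinset α).filter (fun b => (T b).1 ∈ Finset.Icc 1 m))
      (t := Finset.Icc 1 m)
      (fun x hx => (Finset.mem_filter.1 hx).2)
    have heq : ∀ i ∈ Finset.Icc 1 m,
        (((diagramFinset α).filter (fun b => (T b).1 ∈ Finset.Icc 1 m)).filter
          (fun b => (T b).1 = i)).card = wtFun α T i := by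
      intro i hi
      unfold wtFun
      congr 1
      ext x
      simp only [Finset.mem_filter]
      constructor
      · rintro ⟨⟨h1, _⟩, h2⟩; exact ⟨h1, h2⟩
      · rintro ⟨h1, h2⟩; exact ⟨⟨h1, h2 ▸ hi⟩, h2⟩
    calc ∑ i ∈ Finset.Icc 1 m, wtFun α T i
        = ((diagramFinset α).filter (fun b => (T b).1 ∈ Finset.Icc 1 m)).card := by
          rw [key]; exact (Finset.sum_congr rfl heq).symm
      _ ≤ (diagramFinset α).card := Finset.card_filter_le _ _
  have hge : (Finset.Icc 1 m).card • 1 ≤ ∑ i ∈ Finset.Icc 1 m, wtFun α T i :=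
    Finset.card_nsmul_le_sum _ _ _ hall
  rw [Nat.card_Icc, smul_eq_mul, mul_one] at hge
  omega

/-- Construction of a peak diagram from closure properties. -/
lemma isPeakDiagram_of (α : List ℕ) (P : Box → Prop)
    (hsub : ∀ b, P b → inDiagram α b)
    (ha : ∀ c c' r, P (c, r) → 1 ≤ c' → c' ≤ c → P (c', r))
    (hb : ∀ c r r', P (c, r) → 1 ≤ r' → r' ≤ r → P (1, r'))
    (hc : ∀ r, P (1, r) → P (1, r + 1) → P (2, r)) :
    IsPeakDiagram {b | P b} := by
  classical
  set M := α.foldr max 0 with hM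
  set L := α.length with hL
  set f : ℕ → ℕ := fun r => ((Finset.Icc 1 M).filter (fun c => P (c, r))).sup id with hf
  set ℓ : ℕ := ((Finset.Icc 1 L).filter (fun r => P (1, r))).sup id with hℓ
  have F1 : ∀ c r, P (c, r) → c ≤ f r := by
    intro c r h
    obtain ⟨h1, h2, h3, h4⟩ := hsub _ h
    have hcM : c ≤ M := le_trans h4 (getD_le_foldr_max (by omega))
    exact Finset.le_sup (f := id) (Finset.mem_filter.2 ⟨Finset.mem_Icc.2 ⟨h1, hcM⟩, h⟩)
  have F2 : ∀ c r, 1 ≤ c → c ≤ f r → P (c, r) := by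
    intro c r h1 h2
    have hne : ((Finset.Icc 1 M).filter (fun x => P (x, r))).Nonempty := by
      by_contra hemp
      rw [Finset.not_nonempty_iff_eq_empty] at hemp
      have : f r = 0 := by simp only [hf, hemp, Finset.sup_empty]; rfl
      omega
    obtain ⟨c0, hc0, hc0e⟩ := Finset.exists_mem_eq_sup _ hne id
    have hP0 : P (c0, r) := (Finset.mem_filter.1 hc0).2
    simp only [hf] at h2
    rw [hc0e] at h2
    simp only [id_eq] at h2
    exact ha c0 c r hP0 h1 h2
  have F3 : ∀ r, P (1, r) → r ≤ ℓ := by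
    intro r h
    obtain ⟨_, h2, h3, _⟩ := hsub _ h
    exact Finset.le_sup (f := id) (Finset.mem_filter.2 ⟨Finset.mem_Icc.2 ⟨h2, h3⟩, h⟩)
  have F4 : ∀ r, 1 ≤ r → r ≤ ℓ → P (1, r) := by
    intro r h1 h2
    have hne : ((Finset.Icc 1 L).filter (fun x => P (1, x))).Nonempty := by
      by_contra hemp
      rw [Finset.not_nonempty_iff_eq_empty] at hemp
      have : ℓ = 0 := by simp only [hℓ, hemp, Finset.sup_empty]; rfl
      omega
    obtain ⟨r0, hr0, hr0e⟩ := Finset.exists_mem_eq_sup _ hne id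
    have hP0 : P (1, r0) := (Finset.mem_filter.1 hr0).2
    simp only [hℓ] at h2
    rw [hr0e] at h2
    simp only [id_eq] at h2
    exact hb 1 r0 r hP0 h1 h2
  refine ⟨(List.range ℓ).map (fun i => f (i + 1)), ⟨?_, ?_⟩, ?_⟩
  · intro a hamem
    obtain ⟨i, hi, rfl⟩ := List.mem_map.1 hamem
    rw [List.mem_range] at hi
    have := F1 1 (i + 1) (F4 (i + 1) (by omega) (by omega))
    omega
  · intro i hi
    rw [List.length_map, List.length_range] at hi
    have hgd : ((List.range ℓ).map (fun j => f (j + 1))).getD i 0 = f (i + 1) := by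
      rw [List.getD_eq_getElem _ 0 (by simpa using (by omega : i < ℓ))]
      simp
    rw [hgd]
    have hP1 := F4 (i + 1) (by omega) (by omega)
    have hP2 := F4 (i + 2) (by omega) (by omega)
    have := F1 2 (i + 1) (hc (i + 1) hP1 hP2)
    omega
  · ext ⟨c, r⟩
    simp only [Set.mem_setOf_eq]
    have hlen : ((List.range ℓ).map (fun j => f (j + 1))).length = ℓ := by simp
    constructor
    · intro h
      obtain ⟨h1, h2, _, _⟩ := hsub _ h
      have hr : r ≤ ℓ := F3 r (hb c r r h (by omega) le_rfl)
      have hgd : ((List.range ℓ).map (fun j => f (j + 1))).getD (r - 1) 0 = f r := by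
        rw [List.getD_eq_getElem _ 0 (by (rw [hlen]; omega))]
        simp only [List.getElem_map, List.getElem_range]
        congr 1
        omega
      exact ⟨h1, h2, by omega, by rw [hgd]; exact F1 c r h⟩
    · rintro ⟨h1, h2, h3, h4⟩
      rw [hlen] at h3
      have hgd : ((List.range ℓ).map (fun j => f (j + 1))).getD (r - 1) 0 = f r := by
        rw [List.getD_eq_getElem _ 0 (by (rw [hlen]; omega))]
        simp only [List.getElem_map, List.getElem_range]
        congr 1
        omega
      rw [hgd] at h4
      exact F2 c r h1 h4

lemma keyLt_row {n : ℕ} {α : List ℕ} {T : Box → MEntry} (hT : InMPCT n α T)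
    {c c' r : ℕ} (hcc : c < c')
    (h1 : inDiagram α (c, r)) (h2 : inDiagram α (c', r)) :
    keyLt α T (c, r) (c', r) := by
  obtain ⟨hle, hmark⟩ := hT.1.row_weak c c' r hcc h1 h2
  rcases lt_or_eq_of_le hle with h | h
  · exact Or.inl h
  · have he : T (c, r) = T (c', r) :=
      mcode_inj (hT.1.pos _ h1) (hT.1.pos _ h2) h
    by_cases hm : (T (c, r)).2 = true
    · exact absurd he (hmark hm)
    · refine Or.inr ⟨h, Or.inr ⟨?_, hcc⟩⟩
      unfold stdk2
      rw [if_neg hm, if_neg (by rw [← he]; exact hm)]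

lemma keyLt_key {n : ℕ} {α : List ℕ} {T : Box → MEntry} (hT : InMPCT n α T)
    (hcard : (diagramFinset α).card = n) {r : ℕ}
    (h2r : inDiagram α (2, r)) (h1r1 : inDiagram α (1, r + 1)) :
    keyLt α T (2, r) (1, r + 1) := by
  have hx1 : 1 ≤ (T (2, r)).1 := hT.1.pos _ h2r
  have hy1 : 1 ≤ (T (1, r + 1)).1 := hT.1.pos _ h1r1
  rcases lt_trichotomy (mcode (T (2, r))) (mcode (T (1, r + 1))) with h | h | h
  · exact Or.inl h
  · have he : T (2, r) = T (1, r + 1) := mcode_inj hx1 hy1 h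
    by_cases hm : (T (2, r)).2 = true
    · refine Or.inr ⟨h, Or.inl ?_⟩
      unfold stdk2
      rw [if_pos hm, if_pos (by rw [← he]; exact hm)]
      omega
    · exact absurd (by rw [he]) (hT.1.mpct4 r h2r h1r1 (by simpa using hm))
  · exfalso
    have haux : ∀ z : MEntry, 2 * z.1 - 1 ≤ mcode z ∧ mcode z ≤ 2 * z.1 := by
      intro z; unfold mcode; split <;> omega
    have hj_le : (T (1, r + 1)).1 ≤ (T (2, r)).1 := by
      have ha1 := haux (T (1, r + 1)); have ha2 := haux (T (2, r)); omega
    rcases eq_or_lt_of_le hj_le with heq | hlt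
    · -- equal values: y marked, x unmarked
      have hxm : (T (2, r)).2 = false := by
        by_contra hbm
        rw [Bool.not_eq_false] at hbm
        unfold mcode at h
        rw [heq, hbm, if_pos rfl] at h
        split at h <;> omega
      exact hT.1.mpct4 r h2r h1r1 hxm heq
    · have hjn : (T (1, r + 1)).1 ≤ n :=
        value_le hT hcard h1r1
      obtain ⟨γ, hγpeak, hγset⟩ := hT.1.peak_filter ((T (1, r + 1)).1) hjn
      have hy_in : (1, r + 1) ∈ {b : Box | inDiagram α b ∧ (T b).1 ≤ (T (1, r + 1)).1} :=
        ⟨h1r1, le_rfl⟩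
      rw [hγset] at hy_in
      obtain ⟨_, _, hrlen, _⟩ := hy_in
      have hr1 : 1 ≤ r := h2r.2.1
      have h2γ : inDiagram γ (2, r) := by
        have hpk := hγpeak.2 (r - 1) (by omega)
        exact ⟨by omega, hr1, by omega, show (2:ℕ) ≤ γ.getD (r - 1) 0 by omega⟩
      have hx_in : (2, r) ∈ {b : Box | inDiagram γ b} := h2γ
      rw [← hγset] at hx_in
      exact absurd hx_in.2 (by omega)

end StdAux


theorem stmt0 (n : ℕ) (α : List ℕ) (hα : IsPeakComposition n α)
    (T : Box → MEntry) (hT : InMPCT n α T) :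
    InSMPCT n α (stdize α T) := by
  have hcard : (diagramFinset α).card = n := by
    rw [card_diagramFinset]; exact hα.1.2
  set S := stdize α T with hS
  have hval : ∀ b, inDiagram α b → (S b).1 = rk α T b + 1 := fun b hb => by
    rw [hS, stdize_apply hb]
  have hrkmono : ∀ a b, inDiagram α a → inDiagram α b → keyLt α T a b →
      (S a).1 < (S b).1 := by
    intro a b ha hb h
    rw [hval a ha, hval b hb]
    exact Nat.succ_lt_succ (rk_lt_rk ha h)
  have hmcode_lt : ∀ a b : Box, inDiagram α a → inDiagram α b → keyLt α T a b →
      mcode (S a) < mcode (S b) := by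
    intro a b ha hb h
    have h1 := hrkmono a b ha hb h
    have hx := hval a ha
    have hy := hval b hb
    unfold mcode
    split <;> split <;> omega
  have hrow1 : ∀ r, 1 ≤ r → r ≤ α.length → inDiagram α (1, r) := by
    intro r h1 h2
    exact ⟨le_rfl, h1, h2, hα.1.1 _ (getD_mem (by omega))⟩
  have hMPCT : IsMPCT n α S := by
    refine ⟨?_, ?_, ?_, ?_, ?_, ?_⟩
    · intro b hb; rw [hS, stdize_apply_not hb]
    · intro b hb; rw [hval b hb]; omega
    · intro c c' r hcc h1 h2
      have hk := keyLt_row hT hcc h1 h2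
      refine ⟨le_of_lt (hmcode_lt _ _ h1 h2 hk), fun _ hEq => ?_⟩
      have hlt := hrkmono _ _ h1 h2 hk
      rw [hEq] at hlt
      exact lt_irrefl _ hlt
    · intro r r' hrr h1 h2
      exact hmcode_lt _ _ h1 h2 (Or.inl (hT.1.col_strict r r' hrr h1 h2))
    · intro k _
      have hclA : ∀ c c' r, (inDiagram α (c, r) ∧ (S (c, r)).1 ≤ k) → 1 ≤ c' → c' ≤ c →
          inDiagram α (c', r) ∧ (S (c', r)).1 ≤ k := by
        intro c c' r h h1 h2
        rcases eq_or_lt_of_le h2 with rfl | hlt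
        · exact h
        · have hd : inDiagram α (c', r) :=
            ⟨h1, h.1.2.1, h.1.2.2.1, le_trans (le_of_lt hlt) h.1.2.2.2⟩
          refine ⟨hd, ?_⟩
          have := hrkmono _ _ hd h.1 (keyLt_row hT hlt hd h.1)
          omega
      apply isPeakDiagram_of α (fun b => inDiagram α b ∧ (S b).1 ≤ k)
      · exact fun b h => h.1
      · exact hclA
      · intro c r r' h h1 h2
        have hPr := hclA c 1 r h le_rfl h.1.1
        rcases eq_or_lt_of_le h2 with rfl | hlt
        · exact hPr
        · have hd : inDiagram α (1, r') := hrow1 r' h1 (by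
            have := h.1.2.2.1
            omega)
          refine ⟨hd, ?_⟩
          have := hrkmono _ _ hd hPr.1 (Or.inl (hT.1.col_strict r' r hlt hd hPr.1))
          omega
      · intro r h1r h2r
        have hr1 : 1 ≤ r := h1r.1.2.1
        have hlen : r + 1 ≤ α.length := h2r.1.2.2.1
        have hd : inDiagram α (2, r) := by
          refine ⟨by omega, hr1, by omega, ?_⟩
          have := hα.2.2 (r - 1) (by omega)
          show (2 : ℕ) ≤ α.getD (r - 1) 0
          omega
        refine ⟨hd, ?_⟩
        have := hrkmono _ _ hd h2r.1 (keyLt_key hT hcard hd h2r.1)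
        have h2 := h2r.2
        omega
    · intro r h2r h1r _
      intro hEq
      rw [hval _ h1r, hval _ h2r] at hEq
      have := rk_injOn hT h1r h2r (by omega)
      exact absurd this (by simp)
  have hwt1 : ∀ i, 1 ≤ i → i ≤ n → wtFun α S i = 1 := by
    intro i h1 h2
    obtain ⟨b0, hb0, hrk0⟩ := rk_surj hT (show i - 1 < (diagramFinset α).card by omega)
    unfold wtFun
    rw [Finset.card_eq_one]
    refine ⟨b0, ?_⟩
    ext b
    simp only [Finset.mem_filter, Finset.mem_singleton, mem_diagramFinset]
    constructor
    · rintro ⟨hb, hv⟩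
      have hvb := hval b hb
      exact rk_injOn hT hb hb0 (by omega)
    · rintro rfl
      exact ⟨hb0, by rw [hval _ hb0]; omega⟩
  have hwt0 : ∀ j, n < j → wtFun α S j = 0 := by
    intro j hj
    unfold wtFun
    rw [Finset.card_eq_zero, Finset.filter_eq_empty_iff]
    intro b hb
    have hbD := mem_diagramFinset.1 hb
    have h1 := hval b hbD
    have h2 := rk_lt_card (T := T) hbD
    rw [hcard] at h2
    omega
  refine ⟨⟨hMPCT, ?_⟩, hwt1⟩
  intro i j h1 hij h0
  by_cases hji : j ≤ n
  · have := hwt1 i h1 (by omega)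
    omega
  · exact hwt0 j (by omega)


end QSQ
end
end

section
/- Let α = (α_1,…,α_k) be a peak composition of n, let 1 ≤ i < k, and let Q be a DIRT of peak shape with row strip shape (α_{k−i+1},…,α_k)^rev and largest entry m. Let Q' be any filling obtained from Q by adjoining the entries m+1, m+2, …, m+α_{k−i} according to the rules: (1) m+1 and m+2 become the first two entries of a new bottom row; (2) each subsequent entry is placed at the end of a row strictly to the right of the last entry placed; (3) no entry is placed at the end of a row of length j if there exists a row of length j+1 below that row. Then Q' is a DIRT of peak shape with row strip shape (α_{k−i},…,α_k)^rev. -/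
open scoped Classical

noncomputable section

namespace QSQ

/-! ### Auxiliary lemmas for Theorem stmt16 -/

section Aux

lemma aux_getD_le_foldr_max (l : List ℕ) (j : ℕ) : l.getD j 0 ≤ l.foldr max 0 := by
  induction l generalizing j with
  | nil => simp [List.getD]
  | cons a t ih =>
    cases j with
    | zero => simp [List.getD]
    | succ j => simpa [List.getD] using le_trans (by simpa [List.getD] using ih j) (le_max_right a _)

lemma aux_mem_diagramFinset {β : List ℕ} {b : Box} :
    b ∈ QSQ.diagramFinset β ↔ QSQ.inDiagram β b := by
  unfold QSQ.diagramFinset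
  simp only [Finset.mem_filter, Finset.mem_product, Finset.mem_Icc]
  constructor
  · exact fun h => h.2
  · intro h
    exact ⟨⟨⟨h.1, le_trans h.2.2.2 (aux_getD_le_foldr_max _ _)⟩, h.2.1, h.2.2.1⟩, h⟩

lemma aux_shapeOf_length (rows : List (List ℕ)) : (QSQ.shapeOf rows).length = rows.length := by
  simp [QSQ.shapeOf]

lemma aux_shapeOf_getD (rows : List (List ℕ)) (j : ℕ) :
    (QSQ.shapeOf rows).getD j 0 = (rows.getD j []).length := by
  unfold QSQ.shapeOf
  rcases lt_or_ge j rows.length with h | h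
  · rw [List.getD_eq_getElem _ _ (by simpa using h), List.getD_eq_getElem _ _ h]; simp
  · rw [List.getD_eq_default _ _ (by simpa using h), List.getD_eq_default _ _ h]; simp

lemma aux_inDiagram_shapeOf (rows : List (List ℕ)) (b : Box) :
    QSQ.inDiagram (QSQ.shapeOf rows) b ↔
      1 ≤ b.1 ∧ 1 ≤ b.2 ∧ b.2 ≤ rows.length ∧ b.1 ≤ (rows.getD (b.2 - 1) []).length := by
  unfold QSQ.inDiagram
  rw [aux_shapeOf_length, aux_shapeOf_getD]

lemma aux_mem_setOfComp {γ : List ℕ} {y : ℕ} :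
    y ∈ QSQ.setOfComp γ ↔ ∃ j, j + 1 < γ.length ∧ (γ.take (j + 1)).sum = y := by
  unfold QSQ.setOfComp
  simp only [List.mem_toFinset, List.mem_map, List.mem_range]
  constructor
  · rintro ⟨j, hj, rfl⟩; exact ⟨j, by omega, rfl⟩
  · rintro ⟨j, hj, rfl⟩; exact ⟨j, by omega, rfl⟩

lemma aux_mem_setOfComp_append {γ : List ℕ} {x y : ℕ} :
    y ∈ QSQ.setOfComp (γ ++ [x]) ↔ y ∈ QSQ.setOfComp γ ∨ (0 < γ.length ∧ y = γ.sum) := by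
  rw [aux_mem_setOfComp, aux_mem_setOfComp]
  constructor
  · rintro ⟨j, hj, hsum⟩
    simp only [List.length_append, List.length_singleton] at hj
    rw [List.take_append_of_le_length (by omega)] at hsum
    rcases lt_or_ge (j+1) γ.length with h | h
    · exact Or.inl ⟨j, h, hsum⟩
    · right
      have : j + 1 = γ.length := by omega
      rw [this, List.take_length] at hsum
      exact ⟨by omega, hsum.symm⟩
  · rintro (⟨j, hj, hsum⟩ | ⟨h0, rfl⟩)
    · refine ⟨j, by simp; omega, ?_⟩
      rwa [List.take_append_of_le_length (by omega)]
    · refine ⟨γ.length - 1, by simp; omega, ?_⟩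
      rw [List.take_append_of_le_length (by omega)]
      have : γ.length - 1 + 1 = γ.length := by omega
      rw [this, List.take_length]

lemma aux_setOfComp_le {γ : List ℕ} {x y : ℕ} (h : y ∈ QSQ.setOfComp (γ ++ [x])) : y ≤ γ.sum := by
  rcases aux_mem_setOfComp_append.1 h with h | h
  · obtain ⟨j, hj, rfl⟩ := aux_mem_setOfComp.1 h
    have hs : γ.sum = (γ.take (j+1)).sum + (γ.drop (j+1)).sum := by
      rw [← List.sum_append, List.take_append_drop]
    omega
  · omega

end Aux

section Append

lemma aux_append_all (n : ℕ) (β : List ℕ) (Q : Box → ℕ)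
    (hd : IsDIRT n β Q) (r₀ c₀ : ℕ)
    (hr₀ : 1 ≤ r₀) (hr₀' : r₀ ≤ β.length)
    (hc₀ : c₀ = β.getD (r₀ - 1) 0 + 1) (hc₀2 : 2 ≤ c₀) (hn : 1 ≤ n)
    (β' : List ℕ) (Q' : Box → ℕ)
    (hβlen : β'.length = β.length)
    (hβr : β'.getD (r₀ - 1) 0 = c₀)
    (hβo : ∀ j, j ≠ r₀ - 1 → β'.getD j 0 = β.getD j 0)
    (hQ : ∀ b : Box, Q' b = if b = (c₀, r₀) then n + 1 else Q b)
    (hrule : ∀ r', 1 ≤ r' → r' < r₀ → β.getD (r' - 1) 0 ≠ c₀)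
    (hwit : ∃ b : Box, inDiagram β b ∧ Q b = n ∧ b.1 < c₀) :
    IsDIRT (n + 1) β' Q' ∧
    (∀ b : Box, inDiagram β' b ↔ inDiagram β b ∨ b = (c₀, r₀)) ∧
    ContR β' Q' n ∧
    (∀ i, 1 ≤ i → i + 1 ≤ n → (ContR β' Q' i ↔ ContR β Q i)) := by
  have hb₀ : ¬ inDiagram β (c₀, r₀) := by
    intro h
    obtain ⟨h1, h2, h3, h4⟩ := h
    simp only at h4
    omega
  have hD : ∀ b : Box, inDiagram β' b ↔ inDiagram β b ∨ b = (c₀, r₀) := by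
    rintro ⟨c, r⟩
    unfold inDiagram
    simp only [Prod.mk.injEq]
    constructor
    · rintro ⟨h1, h2, h3, h4⟩
      by_cases hr : r = r₀
      · subst hr
        rw [hβr] at h4
        rcases eq_or_lt_of_le h4 with he | hl
        · exact Or.inr ⟨he, rfl⟩
        · exact Or.inl ⟨h1, h2, by omega, by omega⟩
      · have hne := hβo (r - 1) (by omega)
        rw [hne] at h4
        exact Or.inl ⟨h1, h2, by omega, h4⟩
    · rintro (⟨h1, h2, h3, h4⟩ | ⟨rfl, rfl⟩)
      · refine ⟨h1, h2, by omega, ?_⟩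
        by_cases hr : r = r₀
        · subst hr; rw [hβr]; omega
        · rw [hβo (r - 1) (by omega)]; exact h4
      · exact ⟨by omega, hr₀, by omega, by rw [hβr]⟩
  have hmax : ∀ b, inDiagram β b → Q b ≤ n := fun b hb => (hd.range b hb).2
  have hold : ∀ b, inDiagram β b → Q' b = Q b := by
    intro b hb
    rw [hQ, if_neg]
    rintro rfl
    exact hb₀ hb
  have hQb₀ : Q' (c₀, r₀) = n + 1 := by rw [hQ, if_pos rfl]
  have hb₀' : inDiagram β' (c₀, r₀) := (hD _).2 (Or.inr rfl)
  -- ContR n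
  have hcontn : ContR β' Q' n := by
    obtain ⟨b₁, hb₁, hQ1, hlt⟩ := hwit
    refine ⟨b₁, aux_mem_diagramFinset.2 ((hD _).2 (Or.inl hb₁)), (c₀, r₀),
      aux_mem_diagramFinset.2 hb₀', ?_, ?_, ?_⟩
    · rw [hold _ hb₁]; exact hQ1
    · rw [hQb₀]
    · exact hlt
  -- ContR transfer
  have hcont : ∀ i, 1 ≤ i → i + 1 ≤ n → (ContR β' Q' i ↔ ContR β Q i) := by
    intro i hi1 hin
    constructor
    · rintro ⟨b, hb, b', hb', h1, h2, hlt⟩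
      rw [aux_mem_diagramFinset] at hb hb'
      have hbβ : inDiagram β b := by
        rcases (hD b).1 hb with h | h
        · exact h
        · rw [h, hQb₀] at h1; omega
      have hbβ' : inDiagram β b' := by
        rcases (hD b').1 hb' with h | h
        · exact h
        · rw [h, hQb₀] at h2; omega
      rw [hold _ hbβ] at h1
      rw [hold _ hbβ'] at h2
      exact ⟨b, aux_mem_diagramFinset.2 hbβ, b', aux_mem_diagramFinset.2 hbβ', h1, h2, hlt⟩
    · rintro ⟨b, hb, b', hb', h1, h2, hlt⟩
      rw [aux_mem_diagramFinset] at hb hb'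
      exact ⟨b, aux_mem_diagramFinset.2 ((hD b).2 (Or.inl hb)), b',
        aux_mem_diagramFinset.2 ((hD b').2 (Or.inl hb')), by rw [hold _ hb]; exact h1,
        by rw [hold _ hb']; exact h2, hlt⟩
  refine ⟨⟨?_, ?_, ?_, ?_, ?_, ?_, ?_, ?_⟩, hD, hcontn, hcont⟩
  · -- offDiag
    intro b hb
    rw [hD] at hb
    push_neg at hb
    rw [hQ, if_neg hb.2]
    exact hd.offDiag b hb.1
  · -- range
    intro b hb
    rcases (hD b).1 hb with h | rfl
    · rw [hold _ h]
      have := hd.range b h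
      omega
    · rw [hQb₀]; omega
  · -- inj
    intro b b' hb hb' he
    rcases (hD b).1 hb with h | rfl <;> rcases (hD b').1 hb' with h' | h'
    · rw [hold _ h, hold _ h'] at he
      exact hd.inj b b' h h' he
    · rw [hold _ h, h', hQb₀] at he
      have := hmax b h; omega
    · rw [hold _ h', hQb₀] at he
      have := hmax b' h'; omega
    · rw [h']
  · -- surj
    intro j hj1 hj
    rcases Nat.lt_or_ge j (n + 1) with h | h
    · obtain ⟨b, hb, hQb⟩ := hd.surj j hj1 (by omega)
      exact ⟨b, (hD b).2 (Or.inl hb), by rw [hold _ hb]; exact hQb⟩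
    · have : j = n + 1 := by omega
      exact ⟨(c₀, r₀), hb₀', by rw [hQb₀, this]⟩
  · -- row_strict
    intro c c' r hcc hb hb'
    by_cases he' : ((c', r) : Box) = (c₀, r₀)
    · rw [Prod.mk.injEq] at he'
      have hbβ : inDiagram β (c, r) := by
        rcases (hD _).1 hb with h | h
        · exact h
        · rw [Prod.mk.injEq] at h; omega
      rw [hold _ hbβ, show ((c', r) : Box) = (c₀, r₀) by rw [Prod.mk.injEq]; exact he', hQb₀]
      have := hmax _ hbβ; omega
    · have hbβ' : inDiagram β (c', r) := by
        rcases (hD _).1 hb' with h | h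
        · exact h
        · exact absurd h he'
      have hbβ : inDiagram β (c, r) := by
        rcases (hD _).1 hb with h | h
        · exact h
        · rw [Prod.mk.injEq] at h
          obtain ⟨rfl, rfl⟩ := h
          have := hbβ'.2.2.2
          simp only at this
          omega
      rw [hold _ hbβ, hold _ hbβ']
      exact hd.row_strict c c' r hcc hbβ hbβ'
  · -- col_top_down
    intro r r' hrr hb hb'
    have h1 : ((1, r) : Box) ≠ (c₀, r₀) := by
      intro h; rw [Prod.mk.injEq] at h; omega
    have h2 : ((1, r') : Box) ≠ (c₀, r₀) := by
      intro h; rw [Prod.mk.injEq] at h; omega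
    have hbβ : inDiagram β (1, r) := by
      rcases (hD _).1 hb with h | h
      · exact h
      · exact absurd h h1
    have hbβ' : inDiagram β (1, r') := by
      rcases (hD _).1 hb' with h | h
      · exact h
      · exact absurd h h2
    rw [hold _ hbβ, hold _ hbβ']
    exact hd.col_top_down r r' hrr hbβ hbβ'
  · -- strips_start
    intro j b hj1 hjn hb hQb hpre
    by_cases hbb : b = (c₀, r₀)
    · subst hbb
      rw [hQb₀] at hQb
      rcases hpre with h | h
      · omega
      · exfalso
        apply h
        have hj : j - 1 = n := by omega
        rw [hj]
        exact hcontn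
    · have hbβ : inDiagram β b := by
        rcases (hD b).1 hb with h | h
        · exact h
        · exact absurd h hbb
      rw [hold _ hbβ] at hQb
      have hjn' : j ≤ n := by rw [← hQb]; exact hmax b hbβ
      apply hd.strips_start j b hj1 hjn' hbβ hQb
      rcases hpre with h | h
      · exact Or.inl h
      · right
        intro hc
        apply h
        by_cases hj : j = 1
        · obtain ⟨b₁, hb₁, -, -, hQ1, -⟩ := hc
          rw [aux_mem_diagramFinset] at hb₁
          have := (hd.range b₁ hb₁).1
          omega
        · exact (hcont (j - 1) (by omega) (by omega)).2 (by
            have : j - 1 + 1 = j := by omega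
            exact hc)
  · -- dirt4
    intro c r r' hrr hb hb' hQlt
    by_cases hbb : ((c, r) : Box) = (c₀, r₀)
    · rw [Prod.mk.injEq] at hbb
      obtain ⟨rfl, rfl⟩ := hbb
      have hbβ' : inDiagram β (c, r') := by
        rcases (hD _).1 hb' with h | h
        · exact h
        · rw [Prod.mk.injEq] at h; omega
      have hr'1 : 1 ≤ r' := hbβ'.2.1
      have hcle : c ≤ β.getD (r' - 1) 0 := hbβ'.2.2.2
      have hne := hrule r' hr'1 hrr
      have hnew : inDiagram β (c + 1, r') := ⟨by omega, hbβ'.2.1, hbβ'.2.2.1, by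
        simp only
        omega⟩
      refine ⟨(hD _).2 (Or.inl hnew), ?_⟩
      rw [hold _ hnew, hQb₀]
      have := hmax _ hnew
      omega
    · by_cases hbb' : ((c, r') : Box) = (c₀, r₀)
      · exfalso
        have hbβ : inDiagram β (c, r) := by
          rcases (hD _).1 hb with h | h
          · exact h
          · exact absurd h hbb
        rw [hold _ hbβ, hbb', hQb₀] at hQlt
        have := hmax _ hbβ
        omega
      · have hbβ : inDiagram β (c, r) := by
          rcases (hD _).1 hb with h | h
          · exact h
          · exact absurd h hbb
        have hbβ' : inDiagram β (c, r') := by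
          rcases (hD _).1 hb' with h | h
          · exact h
          · exact absurd h hbb'
        rw [hold _ hbβ, hold _ hbβ'] at hQlt
        obtain ⟨h1, h2⟩ := hd.dirt4 c r r' hrr hbβ hbβ' hQlt
        exact ⟨(hD _).2 (Or.inl h1), by rw [hold _ h1, hold _ hbβ]; exact h2⟩

end Append

lemma aux_append_hrss (n x : ℕ) (β β' : List ℕ) (Q Q' : Box → ℕ) (γ₀ : List ℕ)
    (hrss : HasRowStripShape n β Q (γ₀ ++ [x]))
    (hx : n = γ₀.sum + x) (hx1 : 1 ≤ x)
    (hcontn : ContR β' Q' n)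
    (hcont : ∀ i, 1 ≤ i → i + 1 ≤ n → (ContR β' Q' i ↔ ContR β Q i)) :
    HasRowStripShape (n + 1) β' Q' (γ₀ ++ [x + 1]) := by
  obtain ⟨⟨hpos, hsum⟩, hiff⟩ := hrss
  constructor
  · constructor
    · intro a ha
      rcases List.mem_append.1 ha with h | h
      · exact hpos a (List.mem_append.2 (Or.inl h))
      · simp only [List.mem_singleton] at h; omega
    · rw [List.sum_append] at hsum ⊢
      simp only [List.sum_cons, List.sum_nil] at hsum ⊢
      omega
  · intro i hi1 hin
    rcases Nat.lt_or_ge i n with h | h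
    · rw [hcont i hi1 (by omega), hiff i hi1 (by omega)]
      constructor
      · intro hmem hc
        apply hmem
        rcases aux_mem_setOfComp_append.1 hc with hc' | hc'
        · exact aux_mem_setOfComp_append.2 (Or.inl hc')
        · exact aux_mem_setOfComp_append.2 (Or.inr hc')
      · intro hmem hc
        apply hmem
        rcases aux_mem_setOfComp_append.1 hc with hc' | hc'
        · exact aux_mem_setOfComp_append.2 (Or.inl hc')
        · exact aux_mem_setOfComp_append.2 (Or.inr hc')
    · have hi : i = n := by omega
      subst hi
      refine iff_of_true hcontn ?_
      intro hc
      have := aux_setOfComp_le hc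
      omega

section Prepend

lemma aux_prepend_all (n : ℕ) (β : List ℕ) (Q : Box → ℕ) (hd : IsDIRT n β Q)
    (β' : List ℕ) (Q' : Box → ℕ)
    (hβ : β' = 2 :: β)
    (hQ : ∀ b : Box, Q' b = if b.2 = 1 then
      (if b.1 = 1 then n + 1 else if b.1 = 2 then n + 2 else 0) else Q (b.1, b.2 - 1)) :
    IsDIRT (n + 2) β' Q' ∧ ContR β' Q' (n + 1) ∧ (¬ ContR β' Q' n) ∧
    (∀ i, 1 ≤ i → i + 1 ≤ n → (ContR β' Q' i ↔ ContR β Q i)) := by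
  subst hβ
  have hD : ∀ b : Box, inDiagram (2 :: β) b ↔
      (b.2 = 1 ∧ 1 ≤ b.1 ∧ b.1 ≤ 2) ∨ (2 ≤ b.2 ∧ inDiagram β (b.1, b.2 - 1)) := by
    rintro ⟨c, r⟩
    unfold inDiagram
    simp only [List.length_cons]
    constructor
    · rintro ⟨h1, h2, h3, h4⟩
      rcases Nat.lt_or_ge r 2 with hr | hr
      · have : r = 1 := by omega
        subst this
        simp only [List.getD] at h4
        left
        refine ⟨rfl, h1, ?_⟩
        simpa using h4
      · right
        refine ⟨hr, h1, by omega, by omega, ?_⟩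
        have : (2 :: β).getD (r - 1) 0 = β.getD (r - 2) 0 := by
          have hr1 : r - 1 = (r - 2) + 1 := by omega
          rw [hr1]
          rfl
        rw [this] at h4
        have : (c, r).2 - 1 - 1 = r - 2 := by omega
        simpa [this] using h4
    · rintro (⟨hr, h1, h2⟩ | ⟨hr, h1, h2, h3, h4⟩)
      · subst hr
        exact ⟨h1, by omega, by omega, by simpa [List.getD] using h2⟩
      · refine ⟨h1, by omega, by omega, ?_⟩
        have : (2 :: β).getD (r - 1) 0 = β.getD (r - 2) 0 := by
          have hr1 : r - 1 = (r - 2) + 1 := by omega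
          rw [hr1]
          rfl
        rw [this, show r - 2 = r - 1 - 1 by omega]
        simpa using h4
  have hmax : ∀ b, inDiagram β b → Q b ≤ n := fun b hb => (hd.range b hb).2
  have hmin : ∀ b, inDiagram β b → 1 ≤ Q b := fun b hb => (hd.range b hb).1
  have hQ11 : Q' (1, 1) = n + 1 := by rw [hQ]; norm_num
  have hQ21 : Q' (2, 1) = n + 2 := by rw [hQ]; norm_num
  have hup : ∀ b : Box, 2 ≤ b.2 → Q' b = Q (b.1, b.2 - 1) := by
    intro b hb
    rw [hQ, if_neg (by omega)]
  have hup' : ∀ c r : ℕ, 2 ≤ r → Q' (c, r) = Q (c, r - 1) := fun c r h => hup (c, r) h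
  have hD11 : inDiagram (2 :: β) (1, 1) := (hD _).2 (Or.inl ⟨rfl, by omega, by omega⟩)
  have hD21 : inDiagram (2 :: β) (2, 1) := (hD _).2 (Or.inl ⟨rfl, by omega, by omega⟩)
  -- any box of value ≤ n lives in a row ≥ 2
  have hval : ∀ b : Box, inDiagram (2 :: β) b → 1 ≤ Q' b → Q' b ≤ n → 2 ≤ b.2 ∧
      inDiagram β (b.1, b.2 - 1) ∧ Q' b = Q (b.1, b.2 - 1) := by
    intro b hb h1 h2
    rcases (hD b).1 hb with ⟨hr, hc1, hc2⟩ | ⟨hr, h⟩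
    · exfalso
      rw [hQ, if_pos hr] at h1 h2
      interval_cases h : b.1 <;> simp_all <;> omega
    · exact ⟨hr, h, hup b hr⟩
  have hcont1 : ContR (2 :: β) Q' (n + 1) := by
    exact ⟨(1, 1), aux_mem_diagramFinset.2 hD11, (2, 1), aux_mem_diagramFinset.2 hD21,
      hQ11, hQ21, by omega⟩
  have hval1 : ∀ b : Box, inDiagram (2 :: β) b → Q' b = n + 1 → b = (1, 1) := by
    intro b hb hQb
    rcases (hD b).1 hb with ⟨hr, hc1, hc2⟩ | ⟨hr, h⟩
    · rw [hQ, if_pos hr] at hQb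
      have : b.1 = 1 := by
        by_contra hc
        rw [if_neg hc] at hQb
        by_cases hc2' : b.1 = 2
        · rw [if_pos hc2'] at hQb; omega
        · rw [if_neg hc2'] at hQb; omega
      rw [if_pos this] at hQb
      exact Prod.ext this hr
    · rw [hup b hr] at hQb
      have := hmax _ h
      exfalso
      have : Q (b.1, b.2 - 1) ≤ n := hmax _ h
      omega
  have hcontn : ¬ ContR (2 :: β) Q' n := by
    rintro ⟨b, hb, b', hb', h1, h2, hlt⟩
    rw [aux_mem_diagramFinset] at hb hb'
    have hb1 : 1 ≤ b.1 := hb.1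
    have := hval1 b' hb' h2
    rw [this] at hlt
    simp only at hlt
    omega
  have hcont : ∀ i, 1 ≤ i → i + 1 ≤ n → (ContR (2 :: β) Q' i ↔ ContR β Q i) := by
    intro i hi1 hin
    constructor
    · rintro ⟨b, hb, b', hb', h1, h2, hlt⟩
      rw [aux_mem_diagramFinset] at hb hb'
      obtain ⟨hr, hin1, he1⟩ := hval b hb (by omega) (by omega)
      obtain ⟨hr', hin2, he2⟩ := hval b' hb' (by omega) (by omega)
      exact ⟨(b.1, b.2 - 1), aux_mem_diagramFinset.2 hin1, (b'.1, b'.2 - 1),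
        aux_mem_diagramFinset.2 hin2, by rw [← he1]; exact h1, by rw [← he2]; exact h2, hlt⟩
    · rintro ⟨b, hb, b', hb', h1, h2, hlt⟩
      rw [aux_mem_diagramFinset] at hb hb'
      have hup1 : inDiagram (2 :: β) (b.1, b.2 + 1) :=
        (hD _).2 (Or.inr ⟨by show 2 ≤ b.2 + 1; have := hb.2.1; omega, by simpa using hb⟩)
      have hup2 : inDiagram (2 :: β) (b'.1, b'.2 + 1) :=
        (hD _).2 (Or.inr ⟨by show 2 ≤ b'.2 + 1; have := hb'.2.1; omega, by simpa using hb'⟩)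
      refine ⟨(b.1, b.2 + 1), aux_mem_diagramFinset.2 hup1, (b'.1, b'.2 + 1),
        aux_mem_diagramFinset.2 hup2, ?_, ?_, hlt⟩
      · rw [hup _ (by show 2 ≤ b.2 + 1; have := hb.2.1; omega)]; simpa using h1
      · rw [hup _ (by show 2 ≤ b'.2 + 1; have := hb'.2.1; omega)]; simpa using h2
  refine ⟨⟨?_, ?_, ?_, ?_, ?_, ?_, ?_, ?_⟩, hcont1, hcontn, hcont⟩
  · -- offDiag
    intro b hb
    rw [hQ]
    by_cases hr : b.2 = 1
    · rw [if_pos hr]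
      have : ¬ (b.2 = 1 ∧ 1 ≤ b.1 ∧ b.1 ≤ 2) := fun h => hb ((hD b).2 (Or.inl h))
      by_cases h1 : b.1 = 1
      · exact absurd ⟨hr, by omega, by omega⟩ this
      · by_cases h2 : b.1 = 2
        · exact absurd ⟨hr, by omega, by omega⟩ this
        · rw [if_neg h1, if_neg h2]
    · rw [if_neg hr]
      by_cases h2 : 2 ≤ b.2
      · apply hd.offDiag
        intro hc
        exact hb ((hD b).2 (Or.inr ⟨h2, hc⟩))
      · apply hd.offDiag
        intro hc
        have := hc.2.1
        simp only at this
        omega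
  · -- range
    intro b hb
    rcases (hD b).1 hb with ⟨hr, hc1, hc2⟩ | ⟨hr, h⟩
    · rw [hQ, if_pos hr]
      interval_cases h : b.1 <;> simp <;> omega
    · rw [hup b hr]
      have := hd.range _ h
      omega
  · -- inj
    intro b b' hb hb' he
    rcases (hD b).1 hb with ⟨hr, hc1, hc2⟩ | ⟨hr, h⟩ <;>
      rcases (hD b').1 hb' with ⟨hr', hc1', hc2'⟩ | ⟨hr', h'⟩
    · have e1 : Q' b = if b.1 = 1 then n + 1 else n + 2 := by
        rw [hQ, if_pos hr]
        interval_cases hx : b.1 <;> simp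
      have e2 : Q' b' = if b'.1 = 1 then n + 1 else n + 2 := by
        rw [hQ, if_pos hr']
        interval_cases hx : b'.1 <;> simp
      rw [e1, e2] at he
      have : b.1 = b'.1 := by
        by_cases k1 : b.1 = 1 <;> by_cases k2 : b'.1 = 1 <;> simp [k1, k2] at he <;> omega
      exact Prod.ext this (by omega)
    · exfalso
      rw [hup b' hr'] at he
      have h2 := hmax _ h'
      have e1 : Q' b = if b.1 = 1 then n + 1 else n + 2 := by
        rw [hQ, if_pos hr]
        interval_cases hx : b.1 <;> simp
      rw [e1] at he
      by_cases k1 : b.1 = 1 <;> simp [k1] at he <;> omega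
    · exfalso
      rw [hup b hr] at he
      have h2 := hmax _ h
      have e1 : Q' b' = if b'.1 = 1 then n + 1 else n + 2 := by
        rw [hQ, if_pos hr']
        interval_cases hx : b'.1 <;> simp
      rw [e1] at he
      by_cases k1 : b'.1 = 1 <;> simp [k1] at he <;> omega
    · rw [hup b hr, hup b' hr'] at he
      have := hd.inj _ _ h h' he
      rw [Prod.mk.injEq] at this
      exact Prod.ext this.1 (by omega)
  · -- surj
    intro j hj1 hj
    rcases Nat.lt_or_ge j (n + 1) with h | h
    · obtain ⟨b, hb, hQb⟩ := hd.surj j hj1 (by omega)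
      refine ⟨(b.1, b.2 + 1), (hD _).2 (Or.inr ⟨by show 2 ≤ b.2 + 1; have := hb.2.1; omega,
        by simpa using hb⟩), ?_⟩
      rw [hup _ (by show 2 ≤ b.2 + 1; have := hb.2.1; omega)]
      simpa using hQb
    · rcases Nat.lt_or_ge j (n + 2) with h2 | h2
      · exact ⟨(1, 1), hD11, by rw [hQ11]; omega⟩
      · exact ⟨(2, 1), hD21, by rw [hQ21]; omega⟩
  · -- row_strict
    intro c c' r hcc hb hb'
    rcases (hD _).1 hb with ⟨hr, hc1, hc2⟩ | ⟨hr, h⟩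
    · simp only at hr hc1 hc2
      subst hr
      have hb'2 := (hD _).1 hb'
      simp only at hb'2
      rcases hb'2 with ⟨-, hc1', hc2'⟩ | ⟨hr', -⟩
      · have e1 : c = 1 := by omega
        have e2 : c' = 2 := by omega
        subst e1; subst e2
        rw [hQ11, hQ21]; omega
      · omega
    · simp only at hr
      have hb'2 := (hD _).1 hb'
      simp only at hb'2
      rcases hb'2 with ⟨hr', -, -⟩ | ⟨hr', h'⟩
      · omega
      · rw [hup _ (by simpa using hr), hup _ (by simpa using hr')]
        exact hd.row_strict c c' (r - 1) hcc (by simpa using h) (by simpa using h')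
  · -- col_top_down
    intro r r' hrr hb hb'
    have hbh := (hD _).1 hb
    have hb'2 := (hD _).1 hb'
    simp only at hbh hb'2
    rcases hb'2 with ⟨hr', -, -⟩ | ⟨hr', h'⟩
    · omega
    · have h'' : inDiagram β (1, r' - 1) := by simpa using h'
      rcases hbh with ⟨hr, -, -⟩ | ⟨hr, h⟩
      · subst hr
        rw [hQ11, hup' 1 r' hr']
        have := hmax _ h''
        omega
      · rw [hup' 1 r hr, hup' 1 r' hr']
        exact hd.col_top_down (r - 1) (r' - 1) (by omega) (by simpa using h) h'' 
  · -- strips_start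
    intro j b hj1 hjn hb hQb hpre
    rcases Nat.lt_or_ge j (n + 1) with hsm | hsm
    · obtain ⟨hr, hin1, he1⟩ := hval b hb (by omega) (by omega)
      rw [he1] at hQb
      have : (b.1, b.2 - 1).1 = 1 := by
        apply hd.strips_start j _ hj1 (by omega) hin1 hQb
        rcases hpre with h | h
        · exact Or.inl h
        · right
          intro hc
          apply h
          by_cases hj : j = 1
          · obtain ⟨b₁, hb₁, -, -, hQ1, -⟩ := hc
            rw [aux_mem_diagramFinset] at hb₁
            have := hmin b₁ hb₁
            omega
          · exact (hcont (j - 1) (by omega) (by omega)).2 hc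
      simpa using this
    · rcases Nat.lt_or_ge j (n + 2) with hs2 | hs2
      · have hj : j = n + 1 := by omega
        subst hj
        have := hval1 b hb hQb
        rw [this]
      · have hj : j = n + 2 := by omega
        subst hj
        exfalso
        rcases hpre with h | h
        · omega
        · apply h
          have : n + 2 - 1 = n + 1 := by omega
          rw [this]
          exact hcont1
  · -- dirt4
    intro c r r' hrr hb hb' hQlt
    have hb'2 := (hD _).1 hb'
    simp only at hb'2
    rcases hb'2 with ⟨hr', hc1', hc2'⟩ | ⟨hr', h'⟩
    · exfalso
      subst hr'
      have hbh := (hD _).1 hb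
      simp only at hbh
      rcases hbh with ⟨hr2, -, -⟩ | ⟨hr2, h2⟩
      · omega
      · have h2' : inDiagram β (c, r - 1) := by simpa using h2
        rw [hup' c r hr2] at hQlt
        have hQr : Q' (c, 1) = if c = 1 then n + 1 else n + 2 := by
          rw [hQ]
          simp only [if_pos rfl]
          interval_cases hx : c <;> simp
        rw [hQr] at hQlt
        have := hmax _ h2'
        by_cases k1 : c = 1 <;> simp [k1] at hQlt this <;> omega
    · have hbh := (hD _).1 hb
      simp only at hbh
      rcases hbh with ⟨hr2, -, -⟩ | ⟨hr2, h2⟩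
      · omega
      · rw [hup' c r hr2, hup' c r' hr'] at hQlt
        obtain ⟨g1, g2⟩ := hd.dirt4 c (r - 1) (r' - 1) (by omega) (by simpa using h2)
          (by simpa using h') hQlt
        refine ⟨(hD _).2 (Or.inr ⟨by show 2 ≤ r'; exact hr', by simpa using g1⟩), ?_⟩
        rw [hup' (c + 1) r' hr', hup' c r hr2]
        exact g2

lemma aux_prepend_hrss (n : ℕ) (β β' : List ℕ) (Q Q' : Box → ℕ) (γ₀ : List ℕ)
    (hrss : HasRowStripShape n β Q γ₀) (hn : 1 ≤ n) (hγlen : 0 < γ₀.length)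
    (hcont1 : ContR β' Q' (n + 1)) (hcontn : ¬ ContR β' Q' n)
    (hcont : ∀ i, 1 ≤ i → i + 1 ≤ n → (ContR β' Q' i ↔ ContR β Q i)) :
    HasRowStripShape (n + 2) β' Q' (γ₀ ++ [2]) := by
  obtain ⟨⟨hpos, hsum⟩, hiff⟩ := hrss
  constructor
  · constructor
    · intro a ha
      rcases List.mem_append.1 ha with h | h
      · exact hpos a h
      · simp only [List.mem_singleton] at h; omega
    · rw [List.sum_append]
      simp only [List.sum_cons, List.sum_nil]
      omega
  · intro i hi1 hin
    rcases Nat.lt_or_ge i n with h | h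
    · rw [hcont i hi1 (by omega), hiff i hi1 (by omega)]
      constructor
      · intro hmem hc
        apply hmem
        rcases aux_mem_setOfComp_append.1 hc with hc' | hc'
        · exact hc'
        · omega
      · intro hmem hc
        exact hmem (aux_mem_setOfComp_append.2 (Or.inl hc))
    · rcases Nat.lt_or_ge i (n + 1) with h2 | h2
      · have hi : i = n := by omega
        subst hi
        refine iff_of_false hcontn ?_
        intro hc
        exact hc (aux_mem_setOfComp_append.2 (Or.inr ⟨hγlen, hsum.symm⟩))
      · have hi : i = n + 1 := by omega
        subst hi
        refine iff_of_true hcont1 ?_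
        intro hc
        have := aux_setOfComp_le hc
        omega

end Prepend

section Peak

lemma aux_peak_mono (β β' : List ℕ) (hlen : β'.length = β.length)
    (hmono : ∀ j, β.getD j 0 ≤ β'.getD j 0) (hp : PeakShape β) : PeakShape β' := by
  constructor
  · intro a ha
    obtain ⟨j, hj, rfl⟩ := List.mem_iff_getElem.1 ha
    have h1 : β'.getD j 0 = β'[j] := List.getD_eq_getElem β' 0 hj
    have h2 : 0 < β.getD j 0 := by
      have hjb : j < β.length := by omega
      rw [List.getD_eq_getElem β 0 hjb]
      exact hp.1 _ (List.getElem_mem hjb)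
    have := hmono j
    omega
  · intro j hj
    have := hp.2 j (by omega)
    have := hmono j
    omega

lemma aux_peak_cons (β : List ℕ) (hp : PeakShape β) : PeakShape (2 :: β) := by
  constructor
  · intro a ha
    rcases List.mem_cons.1 ha with rfl | h
    · omega
    · exact hp.1 a h
  · intro j hj
    cases j with
    | zero => simp [List.getD]
    | succ j =>
      have : (2 :: β).getD (j + 1) 0 = β.getD j 0 := rfl
      rw [this]
      apply hp.2
      simp only [List.length_cons] at hj
      omega

end Peak

section Lists

lemma aux_getD_append_lt {l : List ℕ} {j x : ℕ} (h : j < l.length) :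
    (l ++ [x]).getD j 0 = l.getD j 0 := by
  rw [List.getD_eq_getElem _ _ (by simp; omega), List.getD_eq_getElem _ _ h]
  exact List.getElem_append_left h

lemma aux_getD_append_self (l : List ℕ) (x : ℕ) : (l ++ [x]).getD l.length 0 = x := by
  rw [List.getD_eq_getElem _ _ (by simp)]
  simp

lemma aux_getD_append_gt {l : List ℕ} {j x : ℕ} (h : l.length < j) :
    (l ++ [x]).getD j 0 = 0 := by
  apply List.getD_eq_default
  simp
  omega

lemma aux_getD_set_self {l : List (List ℕ)} {j : ℕ} {x : List ℕ} (h : j < l.length) :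
    (l.set j x).getD j [] = x := by
  rw [List.getD_eq_getElem _ _ (by simpa using h)]
  simp [h]

lemma aux_getD_set_ne {l : List (List ℕ)} {j j' : ℕ} {x : List ℕ} (h : j ≠ j') :
    (l.set j x).getD j' [] = l.getD j' [] := by
  simp [List.getD, List.getElem?_set_ne h]

lemma aux_toFilling_set (rows : List (List ℕ)) (r : ℕ) (v : ℕ) (hr : r < rows.length) :
    ∀ b : Box, toFilling (rows.set r ((rows.getD r []) ++ [v])) b =
      if b = ((rows.getD r []).length + 1, r + 1) then v else toFilling rows b := by
  rintro ⟨c, rr⟩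
  by_cases hb : ((c, rr) : Box) = ((rows.getD r []).length + 1, r + 1)
  · rw [if_pos hb]
    rw [Prod.mk.injEq] at hb
    obtain ⟨rfl, rfl⟩ := hb
    unfold toFilling
    rw [if_pos (by simp)]
    simp only
    have h1 : r + 1 - 1 = r := by omega
    rw [h1, aux_getD_set_self hr]
    have h2 : (rows.getD r []).length + 1 - 1 = (rows.getD r []).length := by omega
    rw [h2, aux_getD_append_self]
  · rw [if_neg hb]
    rw [Prod.mk.injEq] at hb
    unfold toFilling
    by_cases hg : 1 ≤ c ∧ 1 ≤ rr
    · rw [if_pos hg, if_pos hg]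
      simp only
      by_cases hrow : rr - 1 = r
      · rw [hrow, aux_getD_set_self hr]
        have hcc : c ≠ (rows.getD r []).length + 1 := by
          intro hc
          exact hb ⟨hc, by omega⟩
        rcases Nat.lt_trichotomy (c - 1) (rows.getD r []).length with h | h | h
        · rw [aux_getD_append_lt h]
        · omega
        · rw [aux_getD_append_gt h, List.getD_eq_default _ _ (by omega)]
      · rw [aux_getD_set_ne (by omega)]
    · rw [if_neg hg, if_neg hg]

lemma aux_toFilling_prepend (x : List ℕ) (rows : List (List ℕ)) :
    ∀ b : Box, toFilling ([x] ++ rows) b =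
      if b.2 = 1 then (if 1 ≤ b.1 then x.getD (b.1 - 1) 0 else 0)
      else toFilling rows (b.1, b.2 - 1) := by
  rintro ⟨c, r⟩
  simp only [toFilling]
  rcases r with _ | _ | r
  · norm_num
  · by_cases hc : 1 ≤ c
    · simp [hc]
    · have hc0 : c = 0 := by omega
      subst hc0
      simp
  · by_cases hc : 1 ≤ c
    · simp [hc]
    · have hc0 : c = 0 := by omega
      subst hc0
      simp

end Lists

/-- The invariant maintained while executing `PlaceSeq`. -/
def AuxGood (m : ℕ) (γ₀ : List ℕ) (rows : List (List ℕ)) (v lc : ℕ) : Prop :=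
  2 ≤ lc ∧ m + 3 ≤ v ∧
  IsDIRT (v - 1) (shapeOf rows) (toFilling rows) ∧
  PeakShape (shapeOf rows) ∧
  HasRowStripShape (v - 1) (shapeOf rows) (toFilling rows) (γ₀ ++ [v - 1 - m]) ∧
  ∃ b : Box, inDiagram (shapeOf rows) b ∧ toFilling rows b = v - 1 ∧ b.1 = lc

lemma aux_step (m : ℕ) (γ₀ : List ℕ) (rows : List (List ℕ)) (v lc r : ℕ)
    (hr : r < rows.length)
    (hright : lc < (rows.getD r []).length + 1)
    (hrule3 : ∀ r' < r, (rows.getD r' []).length ≠ (rows.getD r []).length + 1)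
    (hg : AuxGood m γ₀ rows v lc) :
    AuxGood m γ₀ (rows.set r ((rows.getD r []) ++ [v])) (v + 1)
      ((rows.getD r []).length + 1) := by
  obtain ⟨hlc, hv, hdirt, hpeak, hrss, b₁, hb₁, hQ₁, hcol₁⟩ := hg
  have hβlen : (shapeOf (rows.set r ((rows.getD r []) ++ [v]))).length =
      (shapeOf rows).length := by
    rw [aux_shapeOf_length, aux_shapeOf_length, List.length_set]
  have hβr : (shapeOf (rows.set r ((rows.getD r []) ++ [v]))).getD (r + 1 - 1) 0 =
      (rows.getD r []).length + 1 := by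
    rw [aux_shapeOf_getD]
    have h0 : r + 1 - 1 = r := rfl
    rw [h0, aux_getD_set_self hr]
    simp
  have hβo : ∀ j, j ≠ r + 1 - 1 →
      (shapeOf (rows.set r ((rows.getD r []) ++ [v]))).getD j 0 =
      (shapeOf rows).getD j 0 := by
    intro j hj
    rw [aux_shapeOf_getD, aux_shapeOf_getD, aux_getD_set_ne (by omega)]
  have hQ' := aux_toFilling_set rows r v hr
  have hv1 : v - 1 + 1 = v := by omega
  obtain ⟨hdirt', hD, hcontn, hcont⟩ :=
    aux_append_all (v - 1) (shapeOf rows) (toFilling rows) hdirt (r + 1)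
      ((rows.getD r []).length + 1) (by omega)
      (by rw [aux_shapeOf_length]; omega)
      (by rw [aux_shapeOf_getD]; rfl)
      (by omega) (by omega)
      (shapeOf (rows.set r ((rows.getD r []) ++ [v])))
      (toFilling (rows.set r ((rows.getD r []) ++ [v])))
      hβlen hβr hβo
      (by intro b; rw [hQ' b, hv1])
      (by
        intro r' h1 h2
        rw [aux_shapeOf_getD]
        exact hrule3 (r' - 1) (by omega))
      ⟨b₁, hb₁, hQ₁, by omega⟩
  have hsum : γ₀.sum = m := by
    have h1 := hrss.1.2
    rw [List.sum_append] at h1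
    simp only [List.sum_cons, List.sum_nil, Nat.add_zero] at h1
    omega
  refine ⟨by omega, by omega, ?_, ?_, ?_, ?_⟩
  · have e : v + 1 - 1 = v - 1 + 1 := by omega
    rw [e]
    exact hdirt'
  · apply aux_peak_mono (shapeOf rows) _ hβlen ?_ hpeak
    intro j
    by_cases hj : j = r
    · have h0 : r + 1 - 1 = r := rfl
      rw [h0] at hβr
      rw [hj, hβr, aux_shapeOf_getD]
      omega
    · rw [hβo j (by omega)]
  · have h := aux_append_hrss (v - 1) (v - 1 - m) _ _ _ _ γ₀ hrss (by omega) (by omega)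
      hcontn hcont
    have e1 : v - 1 + 1 = v + 1 - 1 := by omega
    have e2 : v - 1 - m + 1 = v + 1 - 1 - m := by omega
    rw [e1, e2] at h
    exact h
  · refine ⟨((rows.getD r []).length + 1, r + 1), (hD _).2 (Or.inr rfl), ?_, rfl⟩
    rw [hQ' _, if_pos rfl]
    omega

lemma aux_placeSeq (m : ℕ) (γ₀ : List ℕ) :
    ∀ {rows : List (List ℕ)} {v lc cnt : ℕ} {out : List (List ℕ)},
    PlaceSeq rows v lc cnt out → AuxGood m γ₀ rows v lc →
    ∃ lc', AuxGood m γ₀ out (v + cnt) lc' := by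
  intro rows v lc cnt out h
  induction h with
  | refl rows v lc =>
    intro hg
    exact ⟨lc, by simpa using hg⟩
  | step rows v lc cnt r out hr hright hrule3 next ih =>
    intro hg
    obtain ⟨lc', h'⟩ := ih (aux_step m γ₀ rows v lc r hr hright hrule3 hg)
    refine ⟨lc', ?_⟩
    have e : v + (cnt + 1) = v + 1 + cnt := by omega
    rw [e]
    exact h'

theorem stmt16 (n : ℕ) (α : List ℕ) (hα : IsPeakComposition n α)
    (k i : ℕ) (hk : k = α.length) (hi1 : 1 ≤ i) (hik : i < k)
    (Qrows : List (List ℕ)) (m : ℕ) (hm : m = (α.drop (k - i)).sum)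
    (hQdirt : IsDIRT m (shapeOf Qrows) (toFilling Qrows))
    (hQpeak : PeakShape (shapeOf Qrows))
    (hQrss : HasRowStripShape m (shapeOf Qrows) (toFilling Qrows)
      ((α.drop (k - i)).reverse))
    (Q' : List (List ℕ))
    (ha : 2 ≤ α.getD (k - i - 1) 0)
    (hstep : PlaceSeq ([[m + 1, m + 2]] ++ Qrows) (m + 3) 2
      (α.getD (k - i - 1) 0 - 2) Q') :
    IsDIRT (m + α.getD (k - i - 1) 0) (shapeOf Q') (toFilling Q') ∧
    PeakShape (shapeOf Q') ∧
    HasRowStripShape (m + α.getD (k - i - 1) 0) (shapeOf Q') (toFilling Q')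
      ((α.drop (k - i - 1)).reverse) := by
  -- abbreviations
  set a := α.getD (k - i - 1) 0 with hadef
  have hkl : k - i - 1 < α.length := by omega
  have hki : k - i - 1 + 1 = k - i := by omega
  -- m ≥ 1
  have hm1 : 1 ≤ m := by
    by_contra hm0
    have hm0' : m = 0 := by omega
    have hlen : 0 < (α.drop (k - i)).length := by
      rw [List.length_drop]; omega
    obtain ⟨x, hx⟩ := List.exists_mem_of_length_pos hlen
    have hxpos : 0 < x := hα.1.1 x (List.mem_of_mem_drop hx)
    have : x = 0 := by
      have hz : (α.drop (k - i)).sum = 0 := by omega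
      exact (List.sum_eq_zero_iff.1 hz) x hx
    omega
  have hγlen : 0 < ((α.drop (k - i)).reverse).length := by
    rw [List.length_reverse, List.length_drop]; omega
  -- the base tableau [[m+1, m+2]] ++ Qrows
  have hβ0 : shapeOf ([[m + 1, m + 2]] ++ Qrows) = 2 :: shapeOf Qrows := by
    simp [shapeOf]
  have hfill0 : ∀ b : Box, toFilling ([[m + 1, m + 2]] ++ Qrows) b =
      if b.2 = 1 then (if b.1 = 1 then m + 1 else if b.1 = 2 then m + 2 else 0)
      else toFilling Qrows (b.1, b.2 - 1) := by
    intro b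
    rw [aux_toFilling_prepend]
    by_cases hb : b.2 = 1
    · rw [if_pos hb, if_pos hb]
      rcases hc : b.1 with _ | _ | _ | c <;> simp [List.getD]
    · rw [if_neg hb, if_neg hb]
  obtain ⟨hdirt0, hcont1, hcontn0, hcont0⟩ :=
    aux_prepend_all m (shapeOf Qrows) (toFilling Qrows) hQdirt
      (shapeOf ([[m + 1, m + 2]] ++ Qrows)) (toFilling ([[m + 1, m + 2]] ++ Qrows))
      hβ0 hfill0
  have hrss0 := aux_prepend_hrss m (shapeOf Qrows) (shapeOf ([[m + 1, m + 2]] ++ Qrows))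
    (toFilling Qrows) (toFilling ([[m + 1, m + 2]] ++ Qrows)) ((α.drop (k - i)).reverse)
    hQrss hm1 hγlen hcont1 hcontn0 hcont0
  have hbase : AuxGood m ((α.drop (k - i)).reverse) ([[m + 1, m + 2]] ++ Qrows) (m + 3) 2 := by
    refine ⟨le_refl 2, le_refl _, ?_, ?_, ?_, ?_⟩
    · have e : m + 3 - 1 = m + 2 := by omega
      rw [e]
      exact hdirt0
    · rw [hβ0]
      exact aux_peak_cons _ hQpeak
    · have e : m + 3 - 1 = m + 2 := by omega
      have e2 : m + 3 - 1 - m = 2 := by omega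
      rw [e2, e]
      exact hrss0
    · refine ⟨(2, 1), ?_, ?_, rfl⟩
      · rw [hβ0]
        exact ⟨by norm_num, by norm_num, by simp, by simp [List.getD]⟩
      · rw [hfill0]
        norm_num
  obtain ⟨lc', hgood⟩ := aux_placeSeq m ((α.drop (k - i)).reverse) hstep hbase
  have he : m + 3 + (a - 2) = m + a + 1 := by omega
  rw [he] at hgood
  obtain ⟨-, -, hd, hp, hr, -⟩ := hgood
  have e1 : m + a + 1 - 1 = m + a := by omega
  have e2 : m + a + 1 - 1 - m = a := by omega
  rw [e2] at hr
  rw [e1] at hd hr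
  have hdrop : (α.drop (k - i - 1)).reverse = (α.drop (k - i)).reverse ++ [a] := by
    have h1 : α.drop (k - i - 1) = α[k - i - 1] :: α.drop (k - i) := by
      have h2 := List.drop_eq_getElem_cons hkl
      rw [hki] at h2
      exact h2
    rw [h1, List.reverse_cons, hadef, List.getD_eq_getElem _ _ hkl]
  rw [hdrop]
  exact ⟨hd, hp, hr⟩


end QSQ
end
end
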